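/- (Strong divisibility criterion.) Let (D, φ, Fil^•) be a filtered φ-module over Q_p whose Hodge–Tate and Smith polygons have the same endpoints, and let M be a lattice in D with a basis B adapted to both φ and the filtration. Then M is strongly divisible (i.e., the Smith polygon of φ on M equals the Hodge–Tate polygon of (D, Fil^•)) if and only if φ ∘ t_{HT,B}^{−1}(M) = M, where t_{HT,B} is the endomorphism sending each basis vector v ∈ B to p^{t_H(v)} v, with t_H(v) the largest j such that v ∈ Fil^j D. -/

import Mathlib

/-- Strong divisibility criterion.  Let `(D, φ, Fil)` be a filtered
`φ`-module over `ℚ_p` whose Hodge–Tate and Smith polygons have the same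
endpoints, `b` a basis adapted to both `φ` (with Smith invariants `p^{s_i}`)
and the filtration (with Hodge–Tate weights `t_H(b_i) = tH i`), and
`M = ⊕ Z_p b_i` the corresponding lattice.  Then the Smith polygon of `φ` on
`M` equals the Hodge–Tate polygon (i.e. `s = tH`) if and only if
`φ ∘ t_{HT,B}^{−1}(M) = M`. -/
theorem stmt17 (p : ℕ) [Fact p.Prime] (hodd : Odd p)
    (D : Type*) [AddCommGroup D] [Module ℚ_[p] D]
    (d : ℕ) (b : Module.Basis (Fin d) ℚ_[p] D)
    (φ : D ≃ₗ[ℚ_[p]] D)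
    (Fil : ℤ → Submodule ℚ_[p] D)
    (hFilmono : ∀ i j : ℤ, i ≤ j → Fil j ≤ Fil i)
    (hFilexh : ∃ a : ℤ, ∀ j ≤ a, Fil j = ⊤)
    (hFilsep : ∃ c : ℤ, ∀ j : ℤ, c ≤ j → Fil j = ⊥)
    (tH : Fin d → ℤ) (htHmono : Monotone tH)
    (hbFil : ∀ i : Fin d, b i ∈ Fil (tH i) ∧ b i ∉ Fil (tH i + 1))
    (s : Fin d → ℤ) (hsmono : Monotone s)
    (M : Set D)
    (hM : M = {x : D | ∃ c : Fin d → ℤ_[p], x = ∑ i, ((c i : ℚ_[p])) • b i})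
    (hadapt : M = {x : D | ∃ c : Fin d → ℤ_[p],
      x = ∑ i, ((c i : ℚ_[p])) • (((p : ℚ_[p]) ^ (-(s i))) • φ (b i))})
    (hend : ∑ i, s i = ∑ i, tH i) :
    (∀ i, s i = tH i) ↔
      (⇑φ ∘ ⇑((b.constr ℚ_[p]) (fun i => ((p : ℚ_[p]) ^ (-(tH i))) • b i))) '' M
        = M := by
  classical
  have hp1 : 1 < p := (Fact.out : p.Prime).one_lt
  have hp0 : (p : ℚ_[p]) ≠ 0 := Nat.cast_ne_zero.mpr (Fact.out : p.Prime).ne_zero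
  -- the basis F i = p^{-s i} • φ (b i)
  set u : Fin d → ℚ_[p]ˣ := fun i => Units.mk0 ((p : ℚ_[p]) ^ (-(s i)))
    (zpow_ne_zero _ hp0) with hu
  set F : Module.Basis (Fin d) ℚ_[p] D := (b.map φ).unitsSMul u with hF
  have hFi : ∀ i, F i = ((p : ℚ_[p]) ^ (-(s i))) • φ (b i) := by
    intro i
    simp [hF, Module.Basis.unitsSMul_apply, hu, Units.smul_def, Module.Basis.map_apply]
  have hadapt' : M = {x : D | ∃ c : Fin d → ℤ_[p],
      x = ∑ i, ((c i : ℚ_[p])) • F i} := by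
    rw [hadapt]; simp only [hFi]
  set L : D → D :=
    ⇑φ ∘ ⇑((b.constr ℚ_[p]) (fun i => ((p : ℚ_[p]) ^ (-(tH i))) • b i)) with hL
  have hLb : ∀ i, L (b i) = ((p : ℚ_[p]) ^ (s i - tH i)) • F i := by
    intro i
    have : L (b i) = φ (((p : ℚ_[p]) ^ (-(tH i))) • b i) := by
      simp [hL, Module.Basis.constr_basis]
    rw [this, map_smul, hFi, smul_smul, ← zpow_add₀ hp0,
      show s i - tH i + -s i = -tH i from by ring]
  have hLsum : ∀ c : Fin d → ℚ_[p],
      L (∑ i, c i • b i) = ∑ i, (c i * (p : ℚ_[p]) ^ (s i - tH i)) • F i := by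
    intro c
    have h1 : L (∑ i, c i • b i) = ∑ i, c i • L (b i) := by
      simp [hL, Function.comp, map_sum, map_smul]
    rw [h1]
    refine Finset.sum_congr rfl fun i _ => ?_
    rw [hLb, smul_smul]
  -- coordinate extraction
  have coords : ∀ c c' : Fin d → ℚ_[p],
      (∑ i, c i • F i) = (∑ i, c' i • F i) → c = c' := by
    intro c c' hcc
    have h1 := F.repr_sum_self c
    rw [hcc, F.repr_sum_self] at h1
    exact h1.symm
  -- if p^k is the image of a p-adic integer, then 0 ≤ k
  have hk : ∀ (k : ℤ) (z : ℤ_[p]), (p : ℚ_[p]) ^ k = (z : ℚ_[p]) → 0 ≤ k := by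
    intro k z h
    have h1 : ‖(p : ℚ_[p]) ^ k‖ ≤ 1 := by
      rw [h, PadicInt.padic_norm_e_of_padicInt]; exact z.norm_le_one
    rw [Padic.norm_p_zpow] at h1
    by_contra hneg
    push_neg at hneg
    have h2 : (1 : ℝ) < (p : ℝ) ^ (-k) :=
      one_lt_zpow₀ (by exact_mod_cast hp1) (by omega)
    linarith
  -- delta coefficients
  have hbM : ∀ i, b i ∈ M := by
    intro i
    rw [hM]
    refine ⟨fun j => if j = i then 1 else 0, ?_⟩
    simp [apply_ite (fun z : ℤ_[p] => (z : ℚ_[p])), ite_smul]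
  have hFM : ∀ i, F i ∈ M := by
    intro i
    rw [hadapt']
    refine ⟨fun j => if j = i then 1 else 0, ?_⟩
    simp [apply_ite (fun z : ℤ_[p] => (z : ℚ_[p])), ite_smul]
  constructor
  · -- s = tH ⇒ L '' M = M
    intro h
    ext x
    constructor
    · rintro ⟨y, hyM, rfl⟩
      rw [hM] at hyM
      obtain ⟨c, rfl⟩ := hyM
      rw [hLsum]
      rw [hadapt']
      refine ⟨c, ?_⟩
      refine Finset.sum_congr rfl fun i _ => ?_
      rw [h i, sub_self, zpow_zero, mul_one]
    · intro hx
      rw [hadapt'] at hx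
      obtain ⟨c, rfl⟩ := hx
      refine ⟨∑ i, (c i : ℚ_[p]) • b i, by rw [hM]; exact ⟨c, rfl⟩, ?_⟩
      rw [hLsum]
      refine Finset.sum_congr rfl fun i _ => ?_
      rw [h i, sub_self, zpow_zero, mul_one]
  · -- L '' M = M ⇒ s = tH
    intro h i
    -- part (a): 0 ≤ s i - tH i
    have ha : 0 ≤ s i - tH i := by
      have h1 : L (b i) ∈ M := h ▸ Set.mem_image_of_mem L (hbM i)
      rw [hadapt'] at h1
      obtain ⟨c, hc⟩ := h1
      rw [hLb] at hc
      have hc' : (∑ j, (if j = i then (p : ℚ_[p]) ^ (s i - tH i) else 0) • F j)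
          = ∑ j, (c j : ℚ_[p]) • F j := by
        rw [← hc]
        simp [ite_smul]
      have := congrFun (coords _ _ hc') i
      rw [if_pos rfl] at this
      exact hk _ _ this
    -- part (b): s i - tH i ≤ 0
    have hb : s i - tH i ≤ 0 := by
      have h1 : F i ∈ L '' M := h.symm ▸ hFM i
      obtain ⟨y, hyM, hy⟩ := h1
      rw [hM] at hyM
      obtain ⟨c, rfl⟩ := hyM
      rw [hLsum] at hy
      have hy' : (∑ j, ((c j : ℚ_[p]) * (p : ℚ_[p]) ^ (s j - tH j)) • F j)
          = ∑ j, (if j = i then (1 : ℚ_[p]) else 0) • F j := by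
        rw [hy]
        simp [ite_smul]
      have h2 := congrFun (coords _ _ hy') i
      rw [if_pos rfl] at h2
      -- (c i) * p^(s i - tH i) = 1, so p^(tH i - s i) = c i
      have h3 : (p : ℚ_[p]) ^ (-(s i - tH i)) = (c i : ℚ_[p]) := by
        rw [zpow_neg, eq_comm]
        exact eq_inv_of_mul_eq_one_left h2
      have := hk _ _ h3
      omega
    omega
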